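/- Let A ∈ ℝ^{n×n} be block lower triangular, A = [[A₁, 0], [A₂₁, A₂]] with A₁ ∈ ℝ^{k×k}, let B = [B₁; B₂] ∈ ℝ^{n×m} be partitioned conformably, let R = Rᵀ ∈ ℝ^{m×m} be invertible, and suppose A₂ is invertible. Assume that A₂ is unmixed and that no complex eigenvalue of A₁ is the reciprocal of a complex eigenvalue of A₂ (i.e. σ(A₁) ∩ σ(A₂^{−1}) = ∅ over ℂ). If P₁ ∈ ℝ^{k×k} is a symmetric solution of the reduced Stein equation A₁ P₁ A₁ᵀ − P₁ = B₁ R^{−1} B₁ᵀ, then there exist matrices X₁₂ ∈ ℝ^{k×(n−k)} and X₂ = X₂ᵀ ∈ ℝ^{(n−k)×(n−k)} such that P := [[P₁, X₁₂], [X₁₂ᵀ, X₂]] is a symmetric solution of the full Stein equation A P Aᵀ − P = B R^{−1} Bᵀ. -/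

import Mathlib

open Matrix Polynomial

/-- `S` is an `A`-invariant subspace. -/
def AInvariant {n : Type*} [Fintype n] (A : Matrix n n ℝ)
    (S : Submodule ℝ (n → ℝ)) : Prop :=
  ∀ x ∈ S, A.mulVec x ∈ S

/-- The pair `(A, B)` is reachable: the only `A`-invariant subspace containing
the column space of `B` is the whole space. -/
def Reachable {n m : Type*} [Fintype n] [Fintype m] (A : Matrix n n ℝ)
    (B : Matrix n m ℝ) : Prop :=
  ∀ S : Submodule ℝ (n → ℝ), AInvariant A S → LinearMap.range B.mulVecLin ≤ S → S = ⊤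

/-- A real square matrix is unmixed if no two of its complex eigenvalues
(roots of its characteristic polynomial over ℂ) multiply to 1. -/
def Unmixed {n : Type*} [Fintype n] [DecidableEq n] (A : Matrix n n ℝ) : Prop :=
  ∀ μ₁ μ₂ : ℂ, (A.map (algebraMap ℝ ℂ)).charpoly.IsRoot μ₁ →
    (A.map (algebraMap ℝ ℂ)).charpoly.IsRoot μ₂ → μ₁ * μ₂ ≠ 1

/-- `Q` is a (symmetric) solution of the homogeneous algebraic Riccati equation
`Q = AᵀQA − AᵀQB(R + BᵀQB)⁻¹BᵀQA` (with `R + BᵀQB` invertible). -/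
def IsHARESol {n m : Type*} [Fintype n] [DecidableEq n] [Fintype m] [DecidableEq m]
    (A : Matrix n n ℝ) (B : Matrix n m ℝ) (R : Matrix m m ℝ)
    (Q : Matrix n n ℝ) : Prop :=
  Q.IsSymm ∧ IsUnit (R + Bᵀ * Q * B) ∧
    Q = Aᵀ * Q * A - Aᵀ * Q * B * (R + Bᵀ * Q * B)⁻¹ * (Bᵀ * Q * A)

/-- `P` is a (symmetric) solution of the Stein equation `A P Aᵀ − P = B R⁻¹ Bᵀ`. -/
def IsSteinSol {n m : Type*} [Fintype n] [DecidableEq n] [Fintype m] [DecidableEq m]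
    (A : Matrix n n ℝ) (B : Matrix n m ℝ) (R : Matrix m m ℝ)
    (P : Matrix n n ℝ) : Prop :=
  P.IsSymm ∧ A * P * Aᵀ - P = B * R⁻¹ * Bᵀ

/-- `Pr` is the matrix of the orthogonal projection onto the subspace `S`. -/
def IsOrthProjOnto {n : Type*} [Fintype n] (S : Submodule ℝ (n → ℝ))
    (Pr : Matrix n n ℝ) : Prop :=
  Pr.IsSymm ∧ Pr * Pr = Pr ∧ LinearMap.range Pr.mulVecLin = S

/-- `X` is the Moore–Penrose pseudoinverse of `M` (the four Penrose conditions). -/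
def IsMPPseudoinverse {n : Type*} [Fintype n] (M X : Matrix n n ℝ) : Prop :=
  M * X * M = M ∧ X * M * X = X ∧ (M * X)ᵀ = M * X ∧ (X * M)ᵀ = X * M


lemma scalar_eq_smul_one {l : ℕ} (μ : ℂ) :
    Matrix.scalar (Fin l) μ = μ • (1 : Matrix (Fin l) (Fin l) ℂ) := by
  ext i j
  simp [Matrix.scalar_apply, Matrix.one_apply, Matrix.diagonal_apply]

lemma charpoly_eval_eq {l : ℕ} (N : Matrix (Fin l) (Fin l) ℂ) (μ : ℂ) :
    N.charpoly.eval μ = (μ • (1 : Matrix (Fin l) (Fin l) ℂ) - N).det := by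
  rw [Matrix.charpoly, eval_det, matPolyEquiv_charmatrix, ← scalar_eq_smul_one]
  simp

lemma pow_comm_of_comm {k l : ℕ} {A : Matrix (Fin k) (Fin k) ℂ} {M : Matrix (Fin l) (Fin l) ℂ}
    {Y : Matrix (Fin k) (Fin l) ℂ} (h : A * Y = Y * M) (n : ℕ) : A ^ n * Y = Y * M ^ n := by
  induction n with
  | zero => simp
  | succ n ih => rw [pow_succ, pow_succ, Matrix.mul_assoc, h, ← Matrix.mul_assoc, ih, Matrix.mul_assoc]

lemma aeval_comm_of_comm {k l : ℕ} {A : Matrix (Fin k) (Fin k) ℂ} {M : Matrix (Fin l) (Fin l) ℂ}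
    {Y : Matrix (Fin k) (Fin l) ℂ} (h : A * Y = Y * M) (p : ℂ[X]) :
    (aeval A p) * Y = Y * (aeval M p) := by
  induction p using Polynomial.induction_on' with
  | add p q hp hq => rw [map_add, map_add, Matrix.add_mul, Matrix.mul_add, hp, hq]
  | monomial n a =>
      rw [aeval_monomial, aeval_monomial, Algebra.algebraMap_eq_smul_one,
        Algebra.algebraMap_eq_smul_one]
      simp only [Matrix.smul_mul, Matrix.mul_smul, Matrix.one_mul, pow_comm_of_comm h]

lemma sylvester_aux {k l : ℕ} (A : Matrix (Fin k) (Fin k) ℝ) (M : Matrix (Fin l) (Fin l) ℝ)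
    (hdisj : ∀ μ : ℂ, (A.map (algebraMap ℝ ℂ)).charpoly.IsRoot μ →
      ¬ (M.map (algebraMap ℝ ℂ)).charpoly.IsRoot μ)
    (Y : Matrix (Fin k) (Fin l) ℝ) (h : A * Y = Y * M) : Y = 0 := by
  set f := algebraMap ℝ ℂ with hf
  set A' := A.map f with hA'
  set M' := M.map f with hM'
  set Y' := Y.map f with hY'
  have h' : A' * Y' = Y' * M' := by
    rw [hA', hM', hY', ← Matrix.map_mul, ← Matrix.map_mul, h]
  set p := A'.charpoly with hp
  have hXc : Y' * aeval M' p = 0 := by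
    rw [← aeval_comm_of_comm h', Matrix.aeval_self_charpoly, Matrix.zero_mul]
  have hmonic : p.Monic := A'.charpoly_monic
  set L := p.roots.toList with hL
  have hsplit : p = (L.map fun a => X - C a).prod := by
    have h1 : p = (p.roots.map fun a => X - C a).prod :=
      (IsAlgClosed.splits p).eq_prod_roots_of_monic hmonic
    rw [h1, hL, ← Multiset.coe_toList p.roots]
    rw [Multiset.map_coe, Multiset.prod_coe, Multiset.coe_toList]
  have hprod : aeval M' p = (L.map fun a => M' - a • 1).prod := by
    conv_lhs => rw [hsplit]
    rw [map_list_prod, List.map_map]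
    congr 1
    apply List.map_congr_left
    intro a _
    simp [Algebra.algebraMap_eq_smul_one]
  have hdet : (aeval M' p).det ≠ 0 := by
    rw [hprod, ← Matrix.coe_detMonoidHom, map_list_prod, List.map_map]
    apply List.prod_ne_zero
    rw [List.mem_map]
    rintro ⟨a, ha, hdet0⟩
    have haroot : p.IsRoot a := by
      have : a ∈ p.roots := by rw [← Multiset.mem_coe, ← Multiset.coe_toList p.roots] at *; exact ha
      exact (Polynomial.mem_roots hmonic.ne_zero).mp this
    have hMroot : M'.charpoly.IsRoot a := by
      have hneg : M' - a • 1 = -(a • (1 : Matrix (Fin l) (Fin l) ℂ) - M') := by abel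
      have hdet0' : (M' - a • 1).det = 0 := hdet0
      rw [hneg, Matrix.det_neg] at hdet0'
      have : (a • (1 : Matrix (Fin l) (Fin l) ℂ) - M').det = 0 := by
        rcases mul_eq_zero.mp hdet0' with h0 | h0
        · exact absurd h0 (pow_ne_zero _ (by norm_num))
        · exact h0
      rwa [Polynomial.IsRoot, charpoly_eval_eq]
    exact hdisj a haroot hMroot
  have hY'0 : Y' = 0 := by
    have hinv := Matrix.mul_nonsing_inv (aeval M' p) (isUnit_iff_ne_zero.mpr hdet)
    calc Y' = Y' * (aeval M' p * (aeval M' p)⁻¹) := by rw [hinv, Matrix.mul_one]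
    _ = Y' * aeval M' p * (aeval M' p)⁻¹ := by rw [Matrix.mul_assoc]
    _ = 0 := by rw [hXc, Matrix.zero_mul]
  ext i j
  have hij : f (Y i j) = 0 := by
    have := congrFun (congrFun (hY'.symm.trans hY'0) i) j
    simpa [Matrix.map_apply] using this
  exact (map_eq_zero_iff f f.injective).mp hij

/-- The Stein-type linear operator `Y ↦ A Y Mᵀ − Y`. -/
def steinLin {k l : ℕ} (A : Matrix (Fin k) (Fin k) ℝ) (M : Matrix (Fin l) (Fin l) ℝ) :
    Matrix (Fin k) (Fin l) ℝ →ₗ[ℝ] Matrix (Fin k) (Fin l) ℝ where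
  toFun Y := A * Y * Mᵀ - Y
  map_add' Y Z := by
    simp only [Matrix.mul_add, Matrix.add_mul]
    abel
  map_smul' c Y := by
    simp only [Matrix.mul_smul, Matrix.smul_mul, smul_sub, RingHom.id_apply]

lemma steinLin_apply {k l : ℕ} (A : Matrix (Fin k) (Fin k) ℝ) (M : Matrix (Fin l) (Fin l) ℝ)
    (Y : Matrix (Fin k) (Fin l) ℝ) : steinLin A M Y = A * Y * Mᵀ - Y := rfl

lemma stein_inj {k l : ℕ} (A : Matrix (Fin k) (Fin k) ℝ) (M : Matrix (Fin l) (Fin l) ℝ)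
    (hM : IsUnit M)
    (hspec : ∀ μ ν : ℂ, (A.map (algebraMap ℝ ℂ)).charpoly.IsRoot μ →
      (M.map (algebraMap ℝ ℂ)).charpoly.IsRoot ν → μ * ν ≠ 1) :
    Function.Injective (steinLin A M) := by
  rw [← LinearMap.ker_eq_bot, LinearMap.ker_eq_bot']
  intro Y hY
  rw [steinLin_apply, sub_eq_zero] at hY
  have hdetM : M.det ≠ 0 := (hM.map Matrix.detMonoidHom).ne_zero
  have hMt : IsUnit Mᵀ.det := by
    rw [Matrix.det_transpose]; exact isUnit_iff_ne_zero.mpr hdetM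
  have hcomm : A * Y = Y * (Mᵀ)⁻¹ := by
    have := congrArg (fun Z => Z * (Mᵀ)⁻¹) hY
    simpa [Matrix.mul_assoc, Matrix.mul_nonsing_inv _ hMt] using this
  refine sylvester_aux A (Mᵀ)⁻¹ ?_ Y hcomm
  intro μ hμA hμI
  set f := algebraMap ℝ ℂ with hf
  set N := M.map f with hN
  have hdetN : N.det ≠ 0 := by
    have hdm : (M.map (f : ℝ → ℂ)).det = f M.det := (RingHom.map_det f M).symm
    rw [hN, hdm]
    exact fun h0 => hdetM (f.injective (by rw [h0, map_zero]))
  have hdetNt : (Nᵀ).det ≠ 0 := by rwa [Matrix.det_transpose]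
  have hmapinv : ((Mᵀ)⁻¹).map f = (Nᵀ)⁻¹ := by
    refine (Matrix.inv_eq_right_inv ?_).symm
    have h1 : (Mᵀ).map f = Nᵀ := Matrix.transpose_map
    rw [← h1, ← Matrix.map_mul, Matrix.mul_nonsing_inv _ hMt,
      Matrix.map_one f (map_zero f) (map_one f)]
  have hdetNtinv : ((Nᵀ)⁻¹).det ≠ 0 := by
    rw [Matrix.det_nonsing_inv, Ring.inverse_eq_inv']
    exact inv_ne_zero hdetNt
  have hroot : (μ • (1 : Matrix (Fin l) (Fin l) ℂ) - (Nᵀ)⁻¹).det = 0 := by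
    rw [← charpoly_eval_eq]
    rw [hmapinv] at hμI
    exact hμI
  have hμ0 : μ ≠ 0 := by
    intro h0
    rw [h0, zero_smul, zero_sub, Matrix.det_neg] at hroot
    rcases mul_eq_zero.mp hroot with h1 | h1
    · exact pow_ne_zero _ (by norm_num : (-1 : ℂ) ≠ 0) h1
    · exact hdetNtinv h1
  have hid : μ • (1 : Matrix (Fin l) (Fin l) ℂ) - (Nᵀ)⁻¹
      = (Nᵀ)⁻¹ * (μ • (Nᵀ - μ⁻¹ • 1)) := by
    rw [smul_sub, smul_smul, mul_inv_cancel₀ hμ0, one_smul, Matrix.mul_sub,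
      Matrix.mul_smul, Matrix.nonsing_inv_mul _ (isUnit_iff_ne_zero.mpr hdetNt), Matrix.mul_one]
  have hdd : (Nᵀ - μ⁻¹ • (1 : Matrix (Fin l) (Fin l) ℂ)).det = 0 := by
    rw [hid, Matrix.det_mul, Matrix.det_smul] at hroot
    rcases mul_eq_zero.mp hroot with h1 | h1
    · exact absurd h1 hdetNtinv
    · rcases mul_eq_zero.mp h1 with h2 | h2
      · exact absurd h2 (pow_ne_zero _ hμ0)
      · exact h2
  have hdd2 : (μ⁻¹ • (1 : Matrix (Fin l) (Fin l) ℂ) - N).det = 0 := by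
    have hneg : Nᵀ - μ⁻¹ • (1 : Matrix (Fin l) (Fin l) ℂ)
        = -((μ⁻¹ • (1 : Matrix (Fin l) (Fin l) ℂ) - N)ᵀ) := by
      rw [Matrix.transpose_sub, Matrix.transpose_smul, Matrix.transpose_one]
      abel
    rw [hneg, Matrix.det_neg, Matrix.det_transpose] at hdd
    rcases mul_eq_zero.mp hdd with h1 | h1
    · exact absurd h1 (pow_ne_zero _ (by norm_num : (-1 : ℂ) ≠ 0))
    · exact h1
  have hrootN : N.charpoly.IsRoot μ⁻¹ := by
    rwa [Polynomial.IsRoot, charpoly_eval_eq]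
  exact hspec μ μ⁻¹ hμA hrootN (mul_inv_cancel₀ hμ0)

lemma stein_surj {k l : ℕ} (A : Matrix (Fin k) (Fin k) ℝ) (M : Matrix (Fin l) (Fin l) ℝ)
    (hM : IsUnit M)
    (hspec : ∀ μ ν : ℂ, (A.map (algebraMap ℝ ℂ)).charpoly.IsRoot μ →
      (M.map (algebraMap ℝ ℂ)).charpoly.IsRoot ν → μ * ν ≠ 1) :
    Function.Surjective (steinLin A M) :=
  LinearMap.injective_iff_surjective.mp (stein_inj A M hM hspec)

lemma fromBlocks_sub' {k l m n : ℕ} (a : Matrix (Fin k) (Fin m) ℝ) (b : Matrix (Fin k) (Fin n) ℝ)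
    (c : Matrix (Fin l) (Fin m) ℝ) (d : Matrix (Fin l) (Fin n) ℝ)
    (e : Matrix (Fin k) (Fin m) ℝ) (f : Matrix (Fin k) (Fin n) ℝ)
    (g : Matrix (Fin l) (Fin m) ℝ) (h : Matrix (Fin l) (Fin n) ℝ) :
    fromBlocks a b c d - fromBlocks e f g h = fromBlocks (a - e) (b - f) (c - g) (d - h) := by
  ext (i | i) (j | j) <;> simp [Matrix.fromBlocks, Matrix.sub_apply]

theorem reduced_Stein_solution_extends_to_full_Stein_solution
    {k l m : ℕ} (A₁ : Matrix (Fin k) (Fin k) ℝ) (A₂₁ : Matrix (Fin l) (Fin k) ℝ)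
    (A₂ : Matrix (Fin l) (Fin l) ℝ) (B₁ : Matrix (Fin k) (Fin m) ℝ)
    (B₂ : Matrix (Fin l) (Fin m) ℝ) (R : Matrix (Fin m) (Fin m) ℝ)
    (hR : IsUnit R) (hRsym : R.IsSymm) (hA₂ : IsUnit A₂) (hA₂unmixed : Unmixed A₂)
    (hspec : ∀ μ ν : ℂ, (A₁.map (algebraMap ℝ ℂ)).charpoly.IsRoot μ →
      (A₂.map (algebraMap ℝ ℂ)).charpoly.IsRoot ν → μ * ν ≠ 1)
    (P₁ : Matrix (Fin k) (Fin k) ℝ) (hP₁sym : P₁.IsSymm)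
    (hred : A₁ * P₁ * A₁ᵀ - P₁ = B₁ * R⁻¹ * B₁ᵀ) :
    ∃ (X₁₂ : Matrix (Fin k) (Fin l) ℝ) (X₂ : Matrix (Fin l) (Fin l) ℝ),
      X₂.IsSymm ∧
      IsSteinSol (Matrix.fromBlocks A₁ 0 A₂₁ A₂) (Matrix.fromRows B₁ B₂) R
        (Matrix.fromBlocks P₁ X₁₂ X₁₂ᵀ X₂) := by
  have hRinv : (R⁻¹)ᵀ = R⁻¹ := by rw [Matrix.transpose_nonsing_inv, hRsym.eq]
  obtain ⟨X₁₂, hX₁₂⟩ := stein_surj A₁ A₂ hA₂ hspec (B₁ * R⁻¹ * B₂ᵀ - A₁ * P₁ * A₂₁ᵀ)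
  rw [steinLin_apply] at hX₁₂
  set D := B₂ * R⁻¹ * B₂ᵀ - A₂₁ * P₁ * A₂₁ᵀ - A₂₁ * X₁₂ * A₂ᵀ - A₂ * X₁₂ᵀ * A₂₁ᵀ with hD
  obtain ⟨X₂, hX₂⟩ := stein_surj A₂ A₂ hA₂ hA₂unmixed D
  rw [steinLin_apply] at hX₂
  have hDsymm : Dᵀ = D := by
    rw [hD]
    simp only [Matrix.transpose_sub, Matrix.transpose_mul, Matrix.transpose_transpose,
      hRinv, hP₁sym.eq, Matrix.mul_assoc]
    abel
  have hX₂symm : X₂.IsSymm := by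
    have h1 : steinLin A₂ A₂ X₂ᵀ = steinLin A₂ A₂ X₂ := by
      rw [steinLin_apply, steinLin_apply, hX₂]
      have ht := congrArg Matrix.transpose hX₂
      simp only [Matrix.transpose_sub, Matrix.transpose_mul, Matrix.transpose_transpose] at ht
      rw [hDsymm] at ht
      simpa [Matrix.mul_assoc] using ht
    exact stein_inj A₂ A₂ hA₂ hA₂unmixed h1
  refine ⟨X₁₂, X₂, hX₂symm, ?_, ?_⟩
  · rw [Matrix.IsSymm, Matrix.fromBlocks_transpose, hP₁sym.eq, Matrix.transpose_transpose,
      hX₂symm.eq]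
  · have e1 : A₁ * X₁₂ * A₂ᵀ = B₁ * R⁻¹ * B₂ᵀ - A₁ * P₁ * A₂₁ᵀ + X₁₂ :=
      sub_eq_iff_eq_add.mp hX₁₂
    have e2 : A₂ * X₂ * A₂ᵀ = D + X₂ := sub_eq_iff_eq_add.mp hX₂
    have e1t : A₂ * X₁₂ᵀ * A₁ᵀ = B₂ * R⁻¹ * B₁ᵀ - A₂₁ * P₁ * A₁ᵀ + X₁₂ᵀ := by
      have := congrArg Matrix.transpose e1
      simpa [Matrix.transpose_add, Matrix.transpose_sub, Matrix.transpose_mul,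
        Matrix.transpose_transpose, hRinv, hP₁sym.eq, Matrix.mul_assoc] using this
    have er : A₁ * P₁ * A₁ᵀ = B₁ * R⁻¹ * B₁ᵀ + P₁ := sub_eq_iff_eq_add.mp hred
    rw [Matrix.fromBlocks_transpose, Matrix.transpose_zero, Matrix.fromBlocks_multiply,
      Matrix.fromBlocks_multiply, Matrix.transpose_fromRows, Matrix.fromRows_mul,
      Matrix.fromRows_mul_fromCols, fromBlocks_sub', Matrix.fromBlocks_inj]
    simp only [Matrix.zero_mul, Matrix.mul_zero, add_zero, zero_add, Matrix.add_mul]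
    simp only [Matrix.mul_assoc] at e1 e2 e1t er hD ⊢
    refine ⟨?_, ?_, ?_, ?_⟩
    · rw [er]; abel
    · rw [e1]; abel
    · rw [e1t]; abel
    · rw [e2, hD]; abel
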